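/- Let a_0 ∈ (0,1), set λ = 1 − a_0, and let Φ(λ,r) = 4r³λ² − (7r³ + 3r² − 3r + 1)λ + 6r³ − 2r² − 6r + 2. Then there exists a unique r_0 = r_0(a_0) in the open interval (r_*, 1/3) with Φ(λ, r_0) = 0, where r_* is the unique root in (0,1) of 3r³ − 5r² − 3r + 1 = 0; and for every function f(z) = Σ_{n=0}^∞ a_n z^n analytic in the unit disk D with f(0) = a_0 and Re f(z) < 1 for all z ∈ D, the inequality Σ_{n=0}^∞ |a_n| r^n + (1/(1+a_0) + r/(1−r)) · Σ_{n=1}^∞ |a_n|² r^{2n} ≤ 1 holds for all r ∈ [0, r_0]. -/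

import Mathlib

open Metric Complex MeasureTheory Real Filter

lemma expInt (c : ℤ) :
    (∫ θ in (0:ℝ)..(2*π), Complex.exp (c * θ * Complex.I)) =
      if c = 0 then (2*π : ℂ) else 0 := by
  split_ifs with h
  · subst h; simp
  · have hc : (c : ℂ) * Complex.I ≠ 0 := by
      simp [Complex.I_ne_zero, h]
    have : ∀ θ : ℝ, (c : ℂ) * θ * Complex.I = ((c:ℂ) * Complex.I) * θ := by
      intro θ; ring
    simp_rw [this]
    rw [integral_exp_mul_complex hc]
    have h2 : (c:ℂ) * Complex.I * ((2*π : ℝ) : ℂ) = (c:ℤ) * (2 * π * Complex.I) := by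
      push_cast; ring
    rw [h2, Complex.exp_int_mul_two_pi_mul_I]
    simp

lemma absSummable {f : ℂ → ℂ} {a : ℕ → ℂ}
    (hsum : ∀ z ∈ ball (0:ℂ) 1, HasSum (fun n => a n * z^n) (f z))
    {s : ℝ} (hs0 : 0 ≤ s) (hs1 : s < 1) :
    Summable (fun m : ℕ => ‖a m‖ * s ^ m) := by
  obtain ⟨t, hst, ht1⟩ : ∃ t, s < t ∧ t < 1 := ⟨(1+s)/2, by linarith, by linarith⟩
  have ht0 : 0 < t := lt_of_le_of_lt hs0 hst
  have htmem : ((t:ℂ)) ∈ ball (0:ℂ) 1 := by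
    simp only [mem_ball_zero_iff, Complex.norm_real, Real.norm_eq_abs]
    rw [abs_of_pos ht0]; exact ht1
  have hsummable := (hsum _ htmem).summable
  have hten : Tendsto (fun m : ℕ => ‖a m * (t:ℂ)^m‖) atTop (nhds 0) := by
    simpa using hsummable.tendsto_atTop_zero.norm
  obtain ⟨C, hC⟩ := hten.bddAbove_range
  have hC' : ∀ m : ℕ, ‖a m‖ * t ^ m ≤ C := by
    intro m
    have h := hC (Set.mem_range_self m)
    rwa [norm_mul, norm_pow, Complex.norm_real, Real.norm_eq_abs, abs_of_pos ht0] at h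
  have hgeo : Summable (fun m : ℕ => C * (s/t)^m) :=
    (summable_geometric_of_lt_one (by positivity)
      (by rw [div_lt_one ht0]; exact hst)).mul_left C
  refine Summable.of_nonneg_of_le (fun m => by positivity) (fun m => ?_) hgeo
  have hsp : s^m = t^m * (s/t)^m := by
    rw [← mul_pow]; congr 1; field_simp
  calc ‖a m‖ * s ^ m
      = (‖a m‖ * t ^ m) * (s/t)^m := by rw [hsp]; ring
    _ ≤ C * (s/t)^m := mul_le_mul_of_nonneg_right (hC' m) (by positivity)

lemma memBall {s : ℝ} (hs0 : 0 ≤ s) (hs1 : s < 1) (θ : ℝ) :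
    (s:ℂ) * Complex.exp (θ * Complex.I) ∈ ball (0:ℂ) 1 := by
  simp only [mem_ball_zero_iff, norm_mul, Complex.norm_real, Real.norm_eq_abs,
    Complex.norm_exp_ofReal_mul_I, mul_one]
  rwa [_root_.abs_of_nonneg hs0]

lemma circleCont {f : ℂ → ℂ} {a : ℕ → ℂ}
    (hsum : ∀ z ∈ ball (0:ℂ) 1, HasSum (fun n => a n * z^n) (f z))
    {s : ℝ} (hs0 : 0 ≤ s) (hs1 : s < 1) :
    Continuous (fun θ : ℝ => f (s * Complex.exp (θ * Complex.I))) := by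
  have heq : (fun θ : ℝ => f (s * Complex.exp (θ * Complex.I)))
      = fun θ : ℝ => ∑' m : ℕ, a m * ((s:ℂ) * Complex.exp (θ * Complex.I))^m := by
    funext θ; exact ((hsum _ (memBall hs0 hs1 θ)).tsum_eq).symm
  rw [heq]
  refine continuous_tsum (fun m => by fun_prop) (absSummable hsum hs0 hs1) (fun m θ => ?_)
  rw [norm_mul, norm_pow, norm_mul, Complex.norm_real, Real.norm_eq_abs,
    Complex.norm_exp_ofReal_mul_I, mul_one, _root_.abs_of_nonneg hs0]

lemma core {f : ℂ → ℂ} {a : ℕ → ℂ}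
    (hsum : ∀ z ∈ ball (0:ℂ) 1, HasSum (fun n => a n * z^n) (f z))
    {s : ℝ} (hs0 : 0 ≤ s) (hs1 : s < 1) (c : ℤ) :
    (∫ θ in (0:ℝ)..(2*π),
        f (s * Complex.exp (θ * Complex.I)) * Complex.exp (c * θ * Complex.I))
      = ∑' m : ℕ, (a m * (s:ℂ)^m * if (m:ℤ) + c = 0 then (2*π:ℂ) else 0) := by
  have habs := absSummable hsum hs0 hs1
  set F : ℕ → ℝ → ℂ := fun m θ =>
    a m * ((s:ℂ) * Complex.exp (θ * Complex.I))^m * Complex.exp (c*θ*Complex.I) with hF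
  have hexpc : ∀ θ : ℝ, ‖Complex.exp ((c:ℂ)*θ*Complex.I)‖ = 1 := by
    intro θ; rw [Complex.norm_exp]; simp
  have hnorm : ∀ m θ, ‖F m θ‖ = ‖a m‖ * s^m := by
    intro m θ
    rw [hF]
    simp only [norm_mul, norm_pow, Complex.norm_real, Real.norm_eq_abs,
      Complex.norm_exp_ofReal_mul_I, _root_.abs_of_nonneg hs0, mul_one, hexpc]
  have hFcont : ∀ m, Continuous (F m) := fun m => by rw [hF]; fun_prop
  have hint : ∀ θ : ℝ, f ((s:ℂ) * Complex.exp (θ * Complex.I)) * Complex.exp (c*θ*Complex.I)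
      = ∑' m : ℕ, F m θ := by
    intro θ
    show _ = ∑' m : ℕ, a m * ((s:ℂ) * Complex.exp (θ * Complex.I))^m
        * Complex.exp ((c:ℂ)*θ*Complex.I)
    rw [tsum_mul_right, ← (hsum _ (memBall hs0 hs1 θ)).tsum_eq]
  simp only [hint]
  rw [intervalIntegral.integral_of_le (by positivity)]
  have hInt : ∀ m, Integrable (F m) (MeasureTheory.volume.restrict (Set.Ioc (0:ℝ) (2*π))) :=
    fun m => (hFcont m).integrableOn_Ioc
  have hSum : Summable fun m => ∫ θ in Set.Ioc (0:ℝ) (2*π), ‖F m θ‖ := by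
    simp only [hnorm, MeasureTheory.setIntegral_const, Real.volume_Ioc, smul_eq_mul,
      sub_zero, ENNReal.toReal_ofReal Real.two_pi_pos.le]
    exact habs.mul_left _
  rw [← MeasureTheory.integral_tsum_of_summable_integral_norm hInt hSum]
  congr 1
  funext m
  rw [← intervalIntegral.integral_of_le (by positivity : (0:ℝ) ≤ 2*π)]
  have hterm : ∀ θ : ℝ, F m θ
      = (a m * (s:ℂ)^m) * Complex.exp ((((m:ℤ)+c : ℤ) : ℂ) * θ * Complex.I) := by
    intro θ
    have harg : (m:ℂ) * ((θ:ℂ)*Complex.I) + (c:ℂ)*θ*Complex.I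
        = (((m:ℤ)+c : ℤ) : ℂ) * θ * Complex.I := by push_cast; ring
    calc F m θ = a m * (s:ℂ)^m
          * (Complex.exp ((m:ℂ)*((θ:ℂ)*Complex.I)) * Complex.exp ((c:ℂ)*θ*Complex.I)) := by
            show a m * ((s:ℂ) * Complex.exp (θ * Complex.I))^m
                * Complex.exp ((c:ℂ)*θ*Complex.I) = _
            rw [mul_pow, ← Complex.exp_nat_mul]
            ring
      _ = (a m * (s:ℂ)^m) * Complex.exp ((((m:ℤ)+c : ℤ) : ℂ) * θ * Complex.I) := by
            rw [← Complex.exp_add, harg]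
  simp only [hterm]
  rw [intervalIntegral.integral_const_mul, expInt ((m:ℤ)+c)]

set_option maxHeartbeats 1000000 in
lemma coeff_bound_s {f : ℂ → ℂ} {a : ℕ → ℂ} {a₀ : ℝ}
    (hsum : ∀ z ∈ ball (0:ℂ) 1, HasSum (fun n => a n * z^n) (f z))
    (hre : ∀ z ∈ ball (0:ℂ) 1, (f z).re < 1)
    (ha0 : a 0 = (a₀:ℂ)) {s : ℝ} (hs0 : 0 < s) (hs1 : s < 1)
    {n : ℕ} (hn : 1 ≤ n) :
    ‖a n‖ * s^n ≤ 2 * (1 - a₀) := by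
  set g : ℝ → ℂ := fun θ => f (s * Complex.exp (θ * Complex.I)) with hg
  have hgc : Continuous g := circleCont hsum hs0.le hs1
  have hJneg : (∫ θ in (0:ℝ)..(2*π), g θ * Complex.exp (((-n : ℤ):ℂ) * θ * Complex.I))
      = a n * (s:ℂ)^n * (2*π) := by
    rw [core hsum hs0.le hs1 (-n : ℤ)]
    rw [tsum_eq_single n]
    · simp
    · intro m hm
      have : ¬ ((m:ℤ) + (-n : ℤ) = 0) := by omega
      rw [if_neg this, mul_zero]
  have hJpos : (∫ θ in (0:ℝ)..(2*π), g θ * Complex.exp (((n : ℤ):ℂ) * θ * Complex.I))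
      = 0 := by
    rw [core hsum hs0.le hs1 (n : ℤ)]
    have hz : ∀ m : ℕ, (a m * (s:ℂ)^m * if (m:ℤ) + (n:ℤ) = 0 then (2*π:ℂ) else 0) = 0 := by
      intro m
      have : ¬ ((m:ℤ) + (n:ℤ) = 0) := by omega
      rw [if_neg this, mul_zero]
    simp only [hz]
    exact tsum_zero
  have hJ0 : (∫ θ in (0:ℝ)..(2*π), g θ) = a 0 * (2*π) := by
    have h := core hsum hs0.le hs1 0
    simp only [Int.cast_zero, zero_mul, Complex.exp_zero, mul_one] at h
    rw [h, tsum_eq_single 0]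
    · simp
    · intro m hm
      have : ¬ ((m:ℤ) + 0 = 0) := by omega
      rw [if_neg this, mul_zero]
  have hec : ∀ c : ℤ, Continuous fun θ : ℝ => Complex.exp ((c:ℂ) * θ * Complex.I) := by
    intro c; fun_prop
  have henorm : ∀ θ : ℝ, ‖Complex.exp (((-n : ℤ):ℂ) * θ * Complex.I)‖ = 1 := by
    intro θ
    rw [Complex.norm_exp]
    simp
  have hnne : ¬ ((-n : ℤ) = 0) := by omega
  have hconj : (∫ θ in (0:ℝ)..(2*π),
      (starRingEnd ℂ) (g θ) * Complex.exp (((-n : ℤ):ℂ) * θ * Complex.I)) = 0 := by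
    have hptw : ∀ θ : ℝ,
        (starRingEnd ℂ) (g θ) * Complex.exp (((-n : ℤ):ℂ) * θ * Complex.I)
        = (starRingEnd ℂ) (g θ * Complex.exp (((n : ℤ):ℂ) * θ * Complex.I)) := by
      intro θ
      rw [map_mul, ← Complex.exp_conj]
      congr 2
      simp only [map_mul, Complex.conj_I, Complex.conj_ofReal, map_intCast]
      push_cast
      ring
    simp only [hptw]
    rw [intervalIntegral.integral_of_le Real.two_pi_pos.le, integral_conj,
      ← intervalIntegral.integral_of_le Real.two_pi_pos.le, hJpos, map_zero]
  have hig : IntervalIntegrable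
      (fun θ => g θ * Complex.exp (((-n : ℤ):ℂ) * θ * Complex.I))
      MeasureTheory.volume 0 (2*π) :=
    (hgc.mul (hec _)).intervalIntegrable _ _
  have hicg : IntervalIntegrable
      (fun θ => (starRingEnd ℂ) (g θ) * Complex.exp (((-n : ℤ):ℂ) * θ * Complex.I))
      MeasureTheory.volume 0 (2*π) :=
    ((Complex.continuous_conj.comp hgc).mul (hec _)).intervalIntegrable _ _
  have hie : IntervalIntegrable
      (fun θ => (2:ℂ) * Complex.exp (((-n : ℤ):ℂ) * θ * Complex.I))
      MeasureTheory.volume 0 (2*π) :=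
    ((continuous_const).mul (hec _)).intervalIntegrable _ _
  have hK : (∫ θ in (0:ℝ)..(2*π), ((2:ℂ) - g θ - (starRingEnd ℂ) (g θ))
        * Complex.exp (((-n : ℤ):ℂ) * θ * Complex.I))
      = -(a n * (s:ℂ)^n * (2*π)) := by
    have expand : ∀ θ : ℝ, ((2:ℂ) - g θ - (starRingEnd ℂ) (g θ))
        * Complex.exp (((-n : ℤ):ℂ) * θ * Complex.I)
        = (2:ℂ) * Complex.exp (((-n : ℤ):ℂ) * θ * Complex.I)
          - g θ * Complex.exp (((-n : ℤ):ℂ) * θ * Complex.I)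
          - (starRingEnd ℂ) (g θ) * Complex.exp (((-n : ℤ):ℂ) * θ * Complex.I) := by
      intro θ; ring
    simp only [expand]
    rw [intervalIntegral.integral_sub (hie.sub hig) hicg,
      intervalIntegral.integral_sub hie hig,
      intervalIntegral.integral_const_mul, hconj, hJneg,
      expInt (-n : ℤ), if_neg hnne]
    ring
  have hKnorm : ‖(∫ θ in (0:ℝ)..(2*π), ((2:ℂ) - g θ - (starRingEnd ℂ) (g θ))
        * Complex.exp (((-n : ℤ):ℂ) * θ * Complex.I))‖
      = 2*π*(‖a n‖ * s^n) := by
    rw [hK, norm_neg, norm_mul, norm_mul, norm_pow, Complex.norm_real, Real.norm_eq_abs,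
      _root_.abs_of_pos hs0, norm_mul, Complex.norm_two, Complex.norm_real, Real.norm_eq_abs,
      _root_.abs_of_pos Real.pi_pos]
    ring
  have hpt : ∀ θ : ℝ, ‖((2:ℂ) - g θ - (starRingEnd ℂ) (g θ))
        * Complex.exp (((-n : ℤ):ℂ) * θ * Complex.I)‖ = 2 - 2*(g θ).re := by
    intro θ
    have hrelt : (g θ).re < 1 := hre _ (memBall hs0.le hs1 θ)
    have h2 : ((2:ℂ) - g θ - (starRingEnd ℂ) (g θ)) = ((2 - 2*(g θ).re : ℝ) : ℂ) := by
      rw [sub_sub, Complex.add_conj]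
      push_cast; ring
    rw [norm_mul, h2, Complex.norm_real, Real.norm_eq_abs, henorm θ, mul_one,
      _root_.abs_of_nonneg (by linarith)]
  have hre_int : (∫ θ in (0:ℝ)..(2*π), (g θ).re) = (∫ θ in (0:ℝ)..(2*π), g θ).re := by
    rw [intervalIntegral.integral_of_le Real.two_pi_pos.le,
      intervalIntegral.integral_of_le Real.two_pi_pos.le]
    simpa using integral_re (hgc.integrableOn_Ioc)
  have hrhs : (∫ θ in (0:ℝ)..(2*π), ‖((2:ℂ) - g θ - (starRingEnd ℂ) (g θ))
        * Complex.exp (((-n : ℤ):ℂ) * θ * Complex.I)‖)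
      = 4*π - 4*π*a₀ := by
    simp only [hpt]
    have hi2 : IntervalIntegrable (fun θ : ℝ => 2*(g θ).re)
        MeasureTheory.volume 0 (2*π) := by
      apply Continuous.intervalIntegrable
      exact continuous_const.mul (Complex.continuous_re.comp hgc)
    rw [intervalIntegral.integral_sub (intervalIntegrable_const) hi2,
      intervalIntegral.integral_const, intervalIntegral.integral_const_mul, hre_int, hJ0, ha0]
    simp only [Complex.mul_re, Complex.ofReal_re, Complex.ofReal_im, smul_eq_mul]
    simp
    ring
  have hb := intervalIntegral.norm_integral_le_integral_norm
    (f := fun θ => ((2:ℂ) - g θ - (starRingEnd ℂ) (g θ))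
      * Complex.exp (((-n : ℤ):ℂ) * θ * Complex.I))
    (μ := MeasureTheory.volume) (a := 0) (b := 2*π) Real.two_pi_pos.le
  rw [hKnorm, hrhs] at hb
  nlinarith [Real.pi_pos, pow_nonneg hs0.le n, norm_nonneg (a n)]

lemma coeff_bound {f : ℂ → ℂ} {a : ℕ → ℂ} {a₀ : ℝ}
    (hsum : ∀ z ∈ ball (0:ℂ) 1, HasSum (fun n => a n * z^n) (f z))
    (hre : ∀ z ∈ ball (0:ℂ) 1, (f z).re < 1)
    (ha0 : a 0 = (a₀:ℂ)) {n : ℕ} (hn : 1 ≤ n) :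
    ‖a n‖ ≤ 2 * (1 - a₀) := by
  have h3 : Filter.Tendsto (fun s : ℝ => ‖a n‖ * s^n)
      (nhdsWithin 1 (Set.Iio 1)) (nhds (‖a n‖ * 1^n)) :=
    ((continuous_const.mul (continuous_pow n)).tendsto 1).mono_left nhdsWithin_le_nhds
  rw [one_pow, mul_one] at h3
  refine le_of_tendsto h3 ?_
  filter_upwards [Ioo_mem_nhdsLT_of_mem (by constructor <;> norm_num :
    (1:ℝ) ∈ Set.Ioc (0:ℝ) 1)] with s hs
  exact coeff_bound_s hsum hre ha0 hs.1 hs.2 hn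

lemma phi_mono {L x y : ℝ} (hL0 : 0 ≤ L) (hL1 : L ≤ 1) (hx : 0 ≤ x) (hy : y ≤ 1/3)
    (hxy : x < y) :
    4*y^3*L^2 - (7*y^3+3*y^2-3*y+1)*L + 6*y^3-2*y^2-6*y+2
      < 4*x^3*L^2 - (7*x^3+3*x^2-3*x+1)*L + 6*x^3-2*x^2-6*x+2 := by
  have hy0 : 0 ≤ y := le_of_lt (lt_of_le_of_lt hx hxy)
  have hx3 : x ≤ 1/3 := by linarith
  have hS : 0 ≤ x^2 + x*y + y^2 := by positivity
  have hS3 : x^2 + x*y + y^2 ≤ 1/3 := by nlinarith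
  have hP : x + y ≤ 2/3 := by linarith
  have hbr : 4*(x^2+x*y+y^2)*L^2 - (7*(x^2+x*y+y^2)+3*(x+y)-3)*L
      + 6*(x^2+x*y+y^2) - 2*(x+y) - 6 ≤ -1 := by
    nlinarith [mul_nonneg hS (mul_nonneg hL0 (by linarith : 0 ≤ 1 - L)),
      mul_nonneg hS hL0, mul_nonneg (mul_nonneg hS hL0) hL0,
      mul_nonneg (by linarith : (0:ℝ) ≤ 1 - (x+y)) (by linarith : 0 ≤ 1 - L),
      mul_nonneg hx hy0]
  nlinarith [mul_pos (by linarith : (0:ℝ) < y - x) (by linarith :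
    (0:ℝ) < -(4*(x^2+x*y+y^2)*L^2 - (7*(x^2+x*y+y^2)+3*(x+y)-3)*L
      + 6*(x^2+x*y+y^2) - 2*(x+y) - 6))]

private def P (L r : ℝ) : ℝ :=
  4*r^3*L^2 - (7*r^3+3*r^2-3*r+1)*L + 6*r^3-2*r^2-6*r+2

private lemma P_cont (L : ℝ) : Continuous (P L) := by
  unfold P; continuity

private lemma P_mono {L x y : ℝ} (hL0 : 0 ≤ L) (hL1 : L ≤ 1) (hx : 0 ≤ x) (hy : y ≤ 1/3)
    (hxy : x < y) : P L y < P L x := phi_mono hL0 hL1 hx hy hxy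

/-- **Theorem 1, second part.** For `a₀ ∈ (0,1)` and `λ = 1 − a₀`, there is a unique
`r₀ ∈ (r_*, 1/3)` with `Φ(λ, r₀) = 0`, where
`Φ(λ,r) = 4r³λ² − (7r³+3r²−3r+1)λ + 6r³−2r²−6r+2` and `r_*` is the unique root of
`3r³−5r²−3r+1 = 0` in `(0,1)`; and for every `f(z) = Σ aₙ zⁿ` analytic in the unit disk with
`f(0) = a₀` and `Re f(z) < 1`, the refined Bohr inequality holds for all `r ∈ [0, r₀]`. -/
theorem refined_bohr_re_lt_one_sharp_radius
    (a₀ : ℝ) (h0 : 0 < a₀) (h1 : a₀ < 1)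
    (rs : ℝ) (hrs : rs ∈ Set.Ioo (0 : ℝ) 1)
    (hroot : 3 * rs ^ 3 - 5 * rs ^ 2 - 3 * rs + 1 = 0) :
    ∃ r₀ ∈ Set.Ioo rs (1 / 3 : ℝ),
      (4 * r₀ ^ 3 * (1 - a₀) ^ 2 - (7 * r₀ ^ 3 + 3 * r₀ ^ 2 - 3 * r₀ + 1) * (1 - a₀) +
          6 * r₀ ^ 3 - 2 * r₀ ^ 2 - 6 * r₀ + 2 = 0) ∧
      (∀ r' ∈ Set.Ioo rs (1 / 3 : ℝ),
        4 * r' ^ 3 * (1 - a₀) ^ 2 - (7 * r' ^ 3 + 3 * r' ^ 2 - 3 * r' + 1) * (1 - a₀) +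
          6 * r' ^ 3 - 2 * r' ^ 2 - 6 * r' + 2 = 0 → r' = r₀) ∧
      ∀ (f : ℂ → ℂ) (a : ℕ → ℂ),
        (∀ z ∈ ball (0 : ℂ) 1, HasSum (fun n : ℕ => a n * z ^ n) (f z)) →
        (∀ z ∈ ball (0 : ℂ) 1, (f z).re < 1) →
        a 0 = (a₀ : ℂ) →
        ∀ r ∈ Set.Icc (0 : ℝ) r₀,
          (∑' n : ℕ, ‖a n‖ * r ^ n) +
            (1 / (1 + a₀) + r / (1 - r)) *
              ∑' n : ℕ, (‖a (n + 1)‖) ^ 2 * r ^ (2 * (n + 1)) ≤ 1 := by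
  obtain ⟨hrs0, hrs1⟩ := hrs
  set L : ℝ := 1 - a₀ with hL
  have hL0 : 0 < L := by rw [hL]; linarith
  have hL1 : L < 1 := by rw [hL]; linarith
  have hrs13 : rs < 1/3 := by
    nlinarith [mul_pos (mul_pos hrs0 hrs0) (by linarith : (0:ℝ) < 5 - 3*rs)]
  -- endpoint signs
  have hc4 : 0 < 6*rs^3-2*rs^2-6*rs+2 - 4*rs^3*L := by
    nlinarith [mul_nonneg (mul_nonneg (mul_nonneg hrs0.le hrs0.le) hrs0.le)
      (by linarith : (0:ℝ) ≤ 1 - L)]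
  have hE0 : L * (3 * rs ^ 3 - 5 * rs ^ 2 - 3 * rs + 1) = 0 := by
    rw [hroot, mul_zero]
  have hgrs : 0 < P L rs := by
    unfold P
    nlinarith [mul_pos (by linarith : (0:ℝ) < 1 - L) hc4, hE0]
  have hg13 : P L (1/3) < 0 := by
    unfold P
    nlinarith [mul_pos hL0 (by linarith : (0:ℝ) < 4 - L)]
  obtain ⟨r₀, hr₀mem, hgr₀⟩ :=
    intermediate_value_Ioo' hrs13.le (P_cont L).continuousOn ⟨hg13, hgrs⟩
  have hr₀0 : 0 < r₀ := lt_trans hrs0 hr₀mem.1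
  refine ⟨r₀, hr₀mem, ?_, ?_, ?_⟩
  · have := hgr₀
    unfold P at this
    linarith [this]
  · intro r' hmem' heq'
    have hval' : P L r' = 0 := by unfold P; linarith [heq']
    rcases lt_trichotomy r' r₀ with hlt | heq | hgt
    · exfalso
      have := P_mono hL0.le hL1.le (le_of_lt (lt_trans hrs0 hmem'.1)) hr₀mem.2.le hlt
      rw [hval', hgr₀] at this
      exact lt_irrefl 0 this
    · exact heq
    · exfalso
      have := P_mono hL0.le hL1.le hr₀0.le hmem'.2.le hgt
      rw [hval', hgr₀] at this
      exact lt_irrefl 0 this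
  · intro f a hsum hre ha0 r hr
    have hr13 : r < 1/3 := lt_of_le_of_lt hr.2 hr₀mem.2
    have hr1 : r < 1 := by linarith
    have hr0 : 0 ≤ r := hr.1
    have hΦ : 0 ≤ P L r := by
      rcases eq_or_lt_of_le hr.2 with he | hlt
      · rw [he, hgr₀]
      · exact le_of_lt (hgr₀ ▸ P_mono hL0.le hL1.le hr0 hr₀mem.2.le hlt)
    have habs0 : ‖a 0‖ = a₀ := by
      rw [ha0, Complex.norm_real, Real.norm_eq_abs, _root_.abs_of_nonneg h0.le]
    have hcoef : ∀ m : ℕ, ‖a (m+1)‖ ≤ 2*L := by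
      intro m
      have := coeff_bound hsum hre ha0 (Nat.succ_le_succ (Nat.zero_le m))
      rw [hL]; exact this
    -- first sum
    have hsm1 : Summable (fun n : ℕ => ‖a n‖ * r^n) := by
      refine Summable.of_nonneg_of_le (fun n => by positivity) (fun n => ?_)
        (((summable_geometric_of_lt_one hr0 hr1)).mul_left (a₀ + 2*L))
      cases n with
      | zero => simp only [pow_zero, mul_one, habs0]; linarith
      | succ m =>
          exact mul_le_mul_of_nonneg_right (le_trans (hcoef m) (by linarith))
            (pow_nonneg hr0 _)
    have hgeo1 : Summable (fun n : ℕ => 2*L * r^(n+1)) := by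
      have he : (fun n : ℕ => 2*L*r^(n+1)) = fun n : ℕ => (2*L*r) * r^n := by
        funext n; ring
      rw [he]
      exact (summable_geometric_of_lt_one hr0 hr1).mul_left _
    have htail1 : Summable (fun n : ℕ => ‖a (n+1)‖ * r^(n+1)) :=
      Summable.of_nonneg_of_le (fun n => by positivity)
        (fun n => mul_le_mul_of_nonneg_right (hcoef n) (pow_nonneg hr0 _)) hgeo1
    have hsum1tail : (∑' n : ℕ, ‖a (n+1)‖ * r^(n+1)) ≤ 2*L*(r * (1-r)⁻¹) := by
      calc (∑' n : ℕ, ‖a (n+1)‖ * r^(n+1))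
          ≤ ∑' n : ℕ, 2*L * r^(n+1) := by
            refine Summable.tsum_le_tsum (fun n => ?_) htail1 hgeo1
            exact mul_le_mul_of_nonneg_right (hcoef n) (pow_nonneg hr0 _)
        _ = 2*L*(r * (1-r)⁻¹) := by
            have he : (fun n : ℕ => 2*L*r^(n+1)) = fun n : ℕ => (2*L*r) * r^n := by
              funext n; ring
            rw [he, tsum_mul_left, tsum_geometric_of_lt_one hr0 hr1]
            ring
    have h1 : (∑' n : ℕ, ‖a n‖ * r^n) ≤ a₀ + 2*L*(r*(1-r)⁻¹) := by
      rw [Summable.tsum_eq_zero_add hsm1]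
      simp only [pow_zero, mul_one, habs0]
      linarith [hsum1tail]
    -- second sum
    have hr2 : r^2 < 1 := by nlinarith
    have hr20 : 0 ≤ r^2 := sq_nonneg r
    have hgeo2 : Summable (fun n : ℕ => (2*L)^2 * (r^2)^(n+1)) := by
      have he : (fun n : ℕ => (2*L)^2*(r^2)^(n+1)) = fun n : ℕ => ((2*L)^2*r^2) * (r^2)^n := by
        funext n; ring
      rw [he]
      exact (summable_geometric_of_lt_one hr20 hr2).mul_left _
    have hterm2 : ∀ n : ℕ, ‖a (n+1)‖^2 * r^(2*(n+1)) ≤ (2*L)^2 * (r^2)^(n+1) := by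
      intro n
      rw [pow_mul]
      exact mul_le_mul_of_nonneg_right
        (pow_le_pow_left₀ (norm_nonneg _) (hcoef n) 2)
        (pow_nonneg hr20 _)
    have hsm2 : Summable (fun n : ℕ => ‖a (n+1)‖^2 * r^(2*(n+1))) :=
      Summable.of_nonneg_of_le (fun n => by positivity) hterm2 hgeo2
    have h2 : (∑' n : ℕ, ‖a (n+1)‖^2 * r^(2*(n+1)))
        ≤ (2*L)^2 * (r^2 * (1-r^2)⁻¹) := by
      calc (∑' n : ℕ, ‖a (n+1)‖^2 * r^(2*(n+1)))
          ≤ ∑' n : ℕ, (2*L)^2 * (r^2)^(n+1) := Summable.tsum_le_tsum hterm2 hsm2 hgeo2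
        _ = (2*L)^2 * (r^2 * (1-r^2)⁻¹) := by
            have he : (fun n : ℕ => (2*L)^2*(r^2)^(n+1))
                = fun n : ℕ => ((2*L)^2*r^2) * (r^2)^n := by
              funext n; ring
            rw [he, tsum_mul_left, tsum_geometric_of_lt_one hr20 hr2]
            ring
    have hcoefnn : 0 ≤ 1/(1+a₀) + r/(1-r) :=
      add_nonneg (by positivity) (div_nonneg hr0 (by linarith))
    have hsm2nn : 0 ≤ ∑' n : ℕ, ‖a (n+1)‖^2 * r^(2*(n+1)) :=
      tsum_nonneg (fun n => by positivity)
    have hkey : a₀ + 2*L*(r*(1-r)⁻¹) + (1/(1+a₀) + r/(1-r)) * ((2*L)^2 * (r^2*(1-r^2)⁻¹))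
        = 1 - L * (P L r) / ((1-r)^2*(1+r)*(1+a₀)) := by
      unfold P
      rw [hL]
      have d1 : (1:ℝ) - r ≠ 0 := by linarith
      have d2 : (1:ℝ) - r^2 ≠ 0 := by nlinarith
      have d3 : (1:ℝ) + a₀ ≠ 0 := by linarith
      have d4 : (1:ℝ) + r ≠ 0 := by linarith
      field_simp
      ring
    calc (∑' n : ℕ, ‖a n‖ * r ^ n) +
          (1 / (1 + a₀) + r / (1 - r)) *
            ∑' n : ℕ, (‖a (n + 1)‖) ^ 2 * r ^ (2 * (n + 1))
        ≤ (a₀ + 2*L*(r*(1-r)⁻¹))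
          + (1/(1+a₀) + r/(1-r)) * ((2*L)^2 * (r^2*(1-r^2)⁻¹)) :=
          add_le_add h1 (mul_le_mul_of_nonneg_left h2 hcoefnn)
      _ = 1 - L * (P L r) / ((1-r)^2*(1+r)*(1+a₀)) := hkey
      _ ≤ 1 := by
          have hd : 0 < (1-r)^2*(1+r)*(1+a₀) := by
            have : (0:ℝ) < 1 - r := by linarith
            have : (0:ℝ) < 1 + r := by linarith
            positivity
          have : 0 ≤ L * (P L r) / ((1-r)^2*(1+r)*(1+a₀)) :=
            div_nonneg (mul_nonneg hL0.le hΦ) hd.le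
          linarith
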